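/- Let w ∈ S_{[a,n]} be decreasing on the interval (k,n] (meaning w(i) > w(i') whenever k < i < i' ≤ n). If u →^k w, i.e., there is an increasing k-chain from u to w, then u is also decreasing on (k,n]. -/

import Mathlib

/-- `w` has finitely many non-fixed points. -/
def FinSupp (w : Equiv.Perm ℤ) : Prop := {i : ℤ | w i ≠ i}.Finite

/-- Descent set of a permutation of ℤ. -/
def Des (w : Equiv.Perm ℤ) : Set ℤ := {i : ℤ | w (i + 1) < w i}

/-- Number of inversions. -/
noncomputable def permLength (w : Equiv.Perm ℤ) : ℕ :=
  {p : ℤ × ℤ | p.1 < p.2 ∧ w p.2 < w p.1}.ncard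

/-- Membership in `S_{[a,n]}`: all non-fixed points lie in `[a,n]`. -/
def InS (a n : ℤ) (w : Equiv.Perm ℤ) : Prop := ∀ i : ℤ, w i ≠ i → a ≤ i ∧ i ≤ n

/-- Cover relation of the `k`-Bruhat order. -/
def BCover (k : ℤ) (u w : Equiv.Perm ℤ) : Prop :=
  ∃ i j : ℤ, i ≤ k ∧ k < j ∧ w = u * Equiv.swap i j ∧
    permLength w = permLength u + 1

/-- The `k`-Bruhat order: reflexive-transitive closure of the cover relation. -/
def kBruhat (k : ℤ) : Equiv.Perm ℤ → Equiv.Perm ℤ → Prop :=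
  Relation.ReflTransGen (BCover k)

/-- There is an increasing `k`-chain from `u` to `w`. -/
def IncTo (k : ℤ) (u w : Equiv.Perm ℤ) : Prop :=
  ∃ (m : ℕ) (us : ℕ → Equiv.Perm ℤ) (ab : ℕ → ℤ × ℤ),
    us 0 = u ∧ us m = w ∧
    (∀ i < m, (ab i).1 ≤ k ∧ k < (ab i).2 ∧
      us (i + 1) = us i * Equiv.swap (ab i).1 (ab i).2 ∧
      permLength (us (i + 1)) = permLength (us i) + 1) ∧
    (∀ i j : ℕ, i < j → j < m → us i (ab i).1 < us j (ab j).1)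

/-- `fix_{(lo,hi]}(u,w) = {u(t) : lo < t ≤ hi, u(t) = w(t)}`. -/
def fixSet (lo hi : ℤ) (u w : Equiv.Perm ℤ) : Set ℤ :=
  {m : ℤ | ∃ t : ℤ, lo < t ∧ t ≤ hi ∧ u t = m ∧ w t = m}

def ISet (w : Equiv.Perm ℤ) : Set (ℤ × ℤ) := {p : ℤ × ℤ | p.1 < p.2 ∧ w p.2 < w p.1}

lemma permLength_eq (w : Equiv.Perm ℤ) : permLength w = (ISet w).ncard := rfl

def Dset (a b : ℤ) : Set (ℤ × ℤ) :=
  {p | (p.1 = a ∧ a < p.2 ∧ p.2 ≤ b) ∨ (p.2 = b ∧ a ≤ p.1 ∧ p.1 < b)}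

def gmap (a b : ℤ) : ℤ × ℤ → ℤ × ℤ :=
  fun p => (min (Equiv.swap a b p.1) (Equiv.swap a b p.2),
            max (Equiv.swap a b p.1) (Equiv.swap a b p.2))

lemma rev_iff (a b : ℤ) (hab : a < b) (p : ℤ × ℤ) (h : p.1 < p.2) :
    Equiv.swap a b p.2 < Equiv.swap a b p.1 ↔ p ∈ Dset a b := by
  rcases p with ⟨p, q⟩
  simp only [Dset, Set.mem_setOf_eq, Equiv.swap_apply_def]
  split_ifs <;> simp_all <;> omega

lemma gD_iff (a b : ℤ) (hab : a < b) (p : ℤ × ℤ) (h : p.1 < p.2) :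
    gmap a b p ∈ Dset a b ↔ p ∈ Dset a b := by
  rcases p with ⟨p, q⟩
  simp only [Dset, gmap, Set.mem_setOf_eq, Equiv.swap_apply_def]
  split_ifs <;> simp_all <;> omega

lemma ginv (a b : ℤ) (p : ℤ × ℤ) (h : p.1 ≤ p.2) : gmap a b (gmap a b p) = p := by
  rcases p with ⟨p, q⟩
  rcases le_total (Equiv.swap a b p) (Equiv.swap a b q) with h1 | h1
  · simp only [gmap, min_eq_left h1, max_eq_right h1, Equiv.swap_apply_self]
    rw [min_eq_left h, max_eq_right h]
  · simp only [gmap, min_eq_right h1, max_eq_left h1, Equiv.swap_apply_self]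
    rw [min_eq_right h, max_eq_left h]

lemma Dfin (a b : ℤ) : (Dset a b).Finite := by
  apply Set.Finite.subset ((Set.finite_Icc a b).prod (Set.finite_Icc a b))
  rintro ⟨p, q⟩ hp
  rcases hp with ⟨h1, h2, h3⟩ | ⟨h1, h2, h3⟩ <;>
    simp only [Set.mem_prod, Set.mem_Icc] <;> omega

lemma himg (a b : ℤ) (hab : a < b) (u v : Equiv.Perm ℤ)
    (hv : v = u * Equiv.swap a b) :
    gmap a b '' ISet v = (ISet u \ Dset a b) ∪ (Dset a b \ ISet u) := by
  have hvx : ∀ x, v x = u (Equiv.swap a b x) := fun x => by rw [hv]; rfl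
  ext x
  constructor
  · rintro ⟨p, ⟨hp1, hp2⟩, rfl⟩
    rw [hvx, hvx] at hp2
    rcases lt_trichotomy (Equiv.swap a b p.1) (Equiv.swap a b p.2) with hc | hc | hc
    · left
      have hpD : p ∉ Dset a b := by
        rw [← rev_iff a b hab p hp1]; omega
      refine ⟨?_, ?_⟩
      · simp only [ISet, gmap, Set.mem_setOf_eq, min_eq_left hc.le, max_eq_right hc.le]
        exact ⟨hc, hp2⟩
      · rw [gD_iff a b hab p hp1]; exact hpD
    · exact absurd (Equiv.injective _ hc) hp1.ne
    · right
      have hpD : p ∈ Dset a b := by rw [← rev_iff a b hab p hp1]; exact hc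
      refine ⟨(gD_iff a b hab p hp1).mpr hpD, ?_⟩
      simp only [ISet, gmap, Set.mem_setOf_eq, min_eq_right hc.le, max_eq_left hc.le]
      rintro ⟨-, h2⟩
      exact absurd hp2 (not_lt.2 h2.le)
  · intro hx
    have hx12 : x.1 < x.2 := by
      rcases hx with ⟨⟨h1, -⟩, -⟩ | ⟨h1, -⟩
      · exact h1
      · rcases h1 with ⟨h1, h2, h3⟩ | ⟨h1, h2, h3⟩ <;> omega
    refine ⟨gmap a b x, ?_, ginv a b x hx12.le⟩
    rcases hx with ⟨⟨h1, h2⟩, hD⟩ | ⟨hD, hI⟩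
    · have hc : Equiv.swap a b x.1 < Equiv.swap a b x.2 := by
        have := (rev_iff a b hab x hx12).not.mpr hD
        have hne : Equiv.swap a b x.1 ≠ Equiv.swap a b x.2 :=
          fun h => hx12.ne (Equiv.injective _ h)
        omega
      simp only [ISet, gmap, Set.mem_setOf_eq, min_eq_left hc.le, max_eq_right hc.le,
        hvx, Equiv.swap_apply_self]
      exact ⟨hc, h2⟩
    · have hc : Equiv.swap a b x.2 < Equiv.swap a b x.1 := (rev_iff a b hab x hx12).mpr hD
      have hI' : u x.1 < u x.2 := by
        have hne : u x.1 ≠ u x.2 := fun h => hx12.ne (Equiv.injective _ h)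
        have : ¬ u x.2 < u x.1 := fun h => hI ⟨hx12, h⟩
        omega
      simp only [ISet, gmap, Set.mem_setOf_eq, min_eq_right hc.le, max_eq_left hc.le,
        hvx, Equiv.swap_apply_self]
      exact ⟨hc, hI'⟩

lemma hinj (a b : ℤ) (v : Equiv.Perm ℤ) : Set.InjOn (gmap a b) (ISet v) := by
  intro p hp q hq h
  have := ginv a b p hp.1.le
  have := ginv a b q hq.1.le
  calc p = gmap a b (gmap a b p) := (ginv a b p hp.1.le).symm
    _ = gmap a b (gmap a b q) := by rw [h]
    _ = q := ginv a b q hq.1.le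

lemma cover_props (a b : ℤ) (u v : Equiv.Perm ℤ) (hab : a < b)
    (hv : v = u * Equiv.swap a b)
    (hl : permLength v = permLength u + 1) :
    u a < u b ∧ ∀ t : ℤ, a < t → t < b → ¬(u a < u t ∧ u t < u b) := by
  set D := Dset a b with hDdef
  have hDfin : D.Finite := Dfin a b
  have himg' := himg a b hab u v hv
  have hinj' := hinj a b v
  have hufin : (ISet u).Finite := by
    by_contra hinf
    have hu : (ISet u).Infinite := hinf
    have h1 : (ISet u \ D).Infinite := hu.diff hDfin
    have h2 : (gmap a b '' ISet v).Infinite := by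
      rw [himg']; exact h1.mono Set.subset_union_left
    have h3 : (ISet v).Infinite := h2.of_image
    rw [permLength_eq, permLength_eq, h3.ncard, hu.ncard] at hl
    omega
  have e1 : (ISet v).ncard = (ISet u \ D).ncard + (D \ ISet u).ncard := by
    rw [← Set.ncard_image_of_injOn hinj', himg']
    refine Set.ncard_union_eq ?_ hufin.diff hDfin.diff
    rw [Set.disjoint_left]
    rintro x ⟨-, hx2⟩ ⟨hx3, -⟩
    exact hx2 hx3
  have e2 : (ISet u).ncard = (ISet u \ D).ncard + (D ∩ ISet u).ncard := by
    conv_lhs => rw [← Set.diff_union_inter (ISet u) D]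
    rw [Set.inter_comm]
    refine Set.ncard_union_eq ?_ hufin.diff (hDfin.inter_of_left _)
    rw [Set.disjoint_left]
    rintro x ⟨-, hx2⟩ ⟨hx3, -⟩
    exact hx2 hx3
  have key : (D \ ISet u).ncard = (D ∩ ISet u).ncard + 1 := by
    rw [permLength_eq, permLength_eq] at hl
    omega
  have hne : u a ≠ u b := fun h => hab.ne (Equiv.injective _ h)
  set σ : ℤ × ℤ → ℤ × ℤ := fun p => if p.1 = a then (p.2, b) else (a, p.1) with hσ
  -- basic facts about D elements
  have Dfacts : ∀ p q : ℤ, (p, q) ∈ D →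
      (p = a → a < q ∧ q ≤ b) ∧ (p ≠ a → q = b ∧ a < p ∧ p < b) ∧ p < q := by
    intro p q hpq
    rcases hpq with ⟨h1, h2, h3⟩ | ⟨h1, h2, h3⟩ <;>
      refine ⟨fun hh => by omega, fun hh => ?_, by omega⟩ <;>
      first | (exact absurd h1 hh) | (exact ⟨h1, by omega, by omega⟩)
  have injσ : ∀ S : Set (ℤ × ℤ), S ⊆ D → Set.InjOn σ S := by
    intro S hS
    rintro ⟨p, q⟩ hp ⟨p', q'⟩ hp' heq
    obtain ⟨f1, f2, f3⟩ := Dfacts p q (hS hp)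
    obtain ⟨g1, g2, g3⟩ := Dfacts p' q' (hS hp')
    have ev : ∀ x y : ℤ, σ (x, y) = if x = a then (y, b) else (a, x) := fun _ _ => rfl
    rw [ev, ev] at heq
    by_cases h1 : p = a
    · obtain ⟨hq1, hq2⟩ := f1 h1
      rw [if_pos h1] at heq
      by_cases h2 : p' = a
      · obtain ⟨hq1', hq2'⟩ := g1 h2
        rw [if_pos h2, Prod.mk.injEq] at heq
        exact Prod.ext (by omega) (by omega)
      · obtain ⟨hg1, hg2, hg3⟩ := g2 h2
        rw [if_neg h2, Prod.mk.injEq] at heq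
        omega
    · obtain ⟨hf1, hf2, hf3⟩ := f2 h1
      rw [if_neg h1] at heq
      by_cases h2 : p' = a
      · obtain ⟨hq1', hq2'⟩ := g1 h2
        rw [if_pos h2, Prod.mk.injEq] at heq
        omega
      · obtain ⟨hg1, hg2, hg3⟩ := g2 h2
        rw [if_neg h2, Prod.mk.injEq] at heq
        exact Prod.ext (by omega) (by omega)
  have part1 : u a < u b := by
    rcases hne.lt_or_gt with h | h
    · exact h
    exfalso
    have maps : ∀ p ∈ D \ ISet u, σ p ∈ (D ∩ ISet u) \ {(a, b)} := by
      rintro ⟨p, q⟩ ⟨hpD, hpI⟩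
      obtain ⟨f1, f2, f3⟩ := Dfacts p q hpD
      have hup : u p < u q := by
        have hne' : u p ≠ u q := fun hh => f3.ne (Equiv.injective _ hh)
        have : ¬ u q < u p := fun hh => hpI ⟨f3, hh⟩
        omega
      by_cases hpa : p = a
      · obtain ⟨hq1, hq2⟩ := f1 hpa
        rw [hpa] at hup
        have hqb : q ≠ b := by
          intro hh; rw [hh] at hup; exact absurd hup (not_lt.2 h.le)
        have hσval : σ (p, q) = (q, b) := by simp [hσ, hpa]
        rw [hσval]
        refine ⟨⟨Or.inr ⟨rfl, by omega, by omega⟩, ⟨by omega, lt_trans h hup⟩⟩, ?_⟩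
        simp only [Set.mem_singleton_iff, Prod.mk.injEq]
        omega
      · obtain ⟨hq1, hq2, hq3⟩ := f2 hpa
        rw [hq1] at hup
        have hσval : σ (p, q) = (a, p) := by simp [hσ, hpa]
        rw [hσval]
        refine ⟨⟨Or.inl ⟨rfl, by omega, by omega⟩, ⟨by omega, lt_trans hup h⟩⟩, ?_⟩
        simp only [Set.mem_singleton_iff, Prod.mk.injEq]
        omega
    have hab_mem : (a, b) ∈ D ∩ ISet u := ⟨Or.inl ⟨rfl, hab, le_refl b⟩, hab, h⟩
    have hle : (D \ ISet u).ncard ≤ ((D ∩ ISet u) \ {(a, b)}).ncard :=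
      Set.ncard_le_ncard_of_injOn σ maps (injσ _ (fun x hx => hx.1))
        (hDfin.inter_of_left _).diff
    have hlt : ((D ∩ ISet u) \ {(a, b)}).ncard < (D ∩ ISet u).ncard :=
      Set.ncard_diff_singleton_lt_of_mem hab_mem (hDfin.inter_of_left _)
    omega
  refine ⟨part1, ?_⟩
  rintro t ht1 ht2 ⟨hb1, hb2⟩
  set T : Set (ℤ × ℤ) := {(a, b), (a, t), (t, b)} with hT
  have hTfin : T.Finite := ((Set.finite_singleton _).insert _).insert _
  have hTsub : T ⊆ D \ ISet u := by
    rintro x hx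
    rcases hx with rfl | rfl | rfl
    · exact ⟨Or.inl ⟨rfl, hab, le_refl b⟩, fun hh => absurd hh.2 (not_lt.2 part1.le)⟩
    · exact ⟨Or.inl ⟨rfl, ht1, ht2.le⟩, fun hh => absurd hh.2 (not_lt.2 hb1.le)⟩
    · exact ⟨Or.inr ⟨rfl, ht1.le, ht2⟩, fun hh => absurd hh.2 (not_lt.2 hb2.le)⟩
  have maps2 : ∀ p ∈ D ∩ ISet u, σ p ∈ (D \ ISet u) \ T := by
    rintro ⟨p, q⟩ ⟨hpD, hpq, hqp⟩
    obtain ⟨f1, f2, f3⟩ := Dfacts p q hpD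
    by_cases hpa : p = a
    · obtain ⟨hq1, hq2⟩ := f1 hpa
      rw [hpa] at hqp
      have hqb : q ≠ b := by
        intro hh; rw [hh] at hqp; exact absurd hqp (not_lt.2 part1.le)
      have hqt : q ≠ t := by
        intro hh; rw [hh] at hqp; exact absurd hqp (not_lt.2 hb1.le)
      have hσval : σ (p, q) = (q, b) := by simp [hσ, hpa]
      rw [hσval]
      refine ⟨⟨Or.inr ⟨rfl, by omega, by omega⟩, fun hh => ?_⟩, ?_⟩
      · exact absurd hh.2 (not_lt.2 (lt_trans hqp part1).le)
      · simp only [hT, Set.mem_insert_iff, Set.mem_singleton_iff, Prod.mk.injEq]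
        omega
    · obtain ⟨hq1, hq2, hq3⟩ := f2 hpa
      rw [hq1] at hqp
      have hpt : p ≠ t := by
        intro hh; rw [hh] at hqp; exact absurd hqp (not_lt.2 hb2.le)
      have hσval : σ (p, q) = (a, p) := by simp [hσ, hpa]
      rw [hσval]
      refine ⟨⟨Or.inl ⟨rfl, by omega, by omega⟩, fun hh => ?_⟩, ?_⟩
      · exact absurd hh.2 (not_lt.2 (lt_trans part1 hqp).le)
      · simp only [hT, Set.mem_insert_iff, Set.mem_singleton_iff, Prod.mk.injEq]
        omega
  have hT3 : T.ncard = 3 := by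
    have h1 : ((a, t) : ℤ × ℤ) ≠ (t, b) := by
      intro hh; rw [Prod.mk.injEq] at hh; omega
    have h2 : ((a, b) : ℤ × ℤ) ∉ ({(a, t), (t, b)} : Set (ℤ × ℤ)) := by
      simp only [Set.mem_insert_iff, Set.mem_singleton_iff, Prod.mk.injEq]
      omega
    rw [hT, Set.ncard_insert_of_notMem h2 ((Set.finite_singleton _).insert _),
      Set.ncard_pair h1]
  have hsub : T ∪ σ '' (D ∩ ISet u) ⊆ D \ ISet u := by
    rintro x (hx | ⟨p, hp, rfl⟩)
    · exact hTsub hx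
    · exact (maps2 p hp).1
  have hdisjT : Disjoint T (σ '' (D ∩ ISet u)) := by
    rw [Set.disjoint_right]
    rintro x ⟨p, hp, rfl⟩
    exact (maps2 p hp).2
  have hcount : (T ∪ σ '' (D ∩ ISet u)).ncard = 3 + (D ∩ ISet u).ncard := by
    rw [Set.ncard_union_eq hdisjT hTfin ((hDfin.inter_of_left _).image _), hT3,
      Set.ncard_image_of_injOn (injσ _ (fun x hx => hx.1))]
  have hle2 : (T ∪ σ '' (D ∩ ISet u)).ncard ≤ (D \ ISet u).ncard :=
    Set.ncard_le_ncard hsub hDfin.diff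
  omega


theorem stmt9 (a n k : ℤ) (u w : Equiv.Perm ℤ) (hw : InS a n w)
    (hdec : ∀ i i' : ℤ, k < i → i < i' → i' ≤ n → w i' < w i)
    (h : IncTo k u w) :
    ∀ i i' : ℤ, k < i → i < i' → i' ≤ n → u i' < u i := by
  obtain ⟨m, us, ab, h0, hm, hstep, -⟩ := h
  suffices H : ∀ j : ℕ, ∀ i : ℕ, i + j = m →
      ∀ c d : ℤ, k < c → c < d → d ≤ n → us i d < us i c by
    intro c d h1 h2 h3
    have := H m 0 (by omega) c d h1 h2 h3
    rwa [h0] at this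
  intro j
  induction j with
  | zero =>
    intro i hi c d h1 h2 h3
    have : i = m := by omega
    subst this
    rw [hm]
    exact hdec c d h1 h2 h3
  | succ j ih =>
    intro i hi c d h1 h2 h3
    have hi' : i < m := by omega
    obtain ⟨hak, hkb, heq, hlen⟩ := hstep i hi'
    have hAB : (ab i).1 < (ab i).2 := lt_of_le_of_lt hak hkb
    obtain ⟨hF1, hF2⟩ := cover_props (ab i).1 (ab i).2 (us i) (us (i + 1)) hAB heq hlen
    have IH : ∀ c d : ℤ, k < c → c < d → d ≤ n → us (i + 1) d < us (i + 1) c :=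
      fun c d h1 h2 h3 => ih (i + 1) (by omega) c d h1 h2 h3
    -- u = us i, v = us (i+1), v = u * swap A B, so u x = v (swap A B x)
    have hux : ∀ x : ℤ, us i x = us (i + 1) (Equiv.swap (ab i).1 (ab i).2 x) := by
      intro x
      rw [heq]
      simp [Equiv.Perm.mul_apply, Equiv.swap_apply_self]
    have hcA : c ≠ (ab i).1 := fun hh => by omega
    have hdA : d ≠ (ab i).1 := fun hh => by omega
    have hvB : us (i + 1) (ab i).2 = us i (ab i).1 := by
      rw [hux (ab i).1, Equiv.swap_apply_left]
    have hvA : us (i + 1) (ab i).1 = us i (ab i).2 := by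
      rw [hux (ab i).2, Equiv.swap_apply_right]
    by_cases hdB : d = (ab i).2
    · -- u d = v A, u c = v c
      have hcB : c ≠ (ab i).2 := fun hh => by omega
      have hud : us i d = us (i + 1) (ab i).1 := by
        rw [hux d, hdB, Equiv.swap_apply_right]
      have huc : us i c = us (i + 1) c := by
        rw [hux c, Equiv.swap_apply_of_ne_of_ne hcA hcB]
      rw [hud, huc]
      -- want v A < v c; from hF2 with t := c
      have hBc : us (i + 1) (ab i).2 < us (i + 1) c := by
        have := IH c (ab i).2 h1 (by omega) (by omega)
        exact this
      have hF2c := hF2 c (by omega) (by omega)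
      -- hF2c : ¬(u A < u c ∧ u c < u B), translate to v
      rw [show us i (ab i).1 = us (i + 1) (ab i).2 from hvB.symm,
        show us i (ab i).2 = us (i + 1) (ab i).1 from hvA.symm, huc] at hF2c
      have hne : us (i + 1) (ab i).1 ≠ us (i + 1) c :=
        fun hh => hcA.symm (Equiv.injective _ hh)
      by_contra hcon
      exact hF2c ⟨hBc, by omega⟩
    · by_cases hcB : c = (ab i).2
      · -- c = B, d > B: u c = v A, u d = v d
        have hdB' : d ≠ (ab i).2 := hdB
        have huc : us i c = us (i + 1) (ab i).1 := by
          rw [hux c, hcB, Equiv.swap_apply_right]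
        have hud : us i d = us (i + 1) d := by
          rw [hux d, Equiv.swap_apply_of_ne_of_ne hdA hdB']
        rw [huc, hud]
        have h1' : us (i + 1) d < us (i + 1) (ab i).2 := IH (ab i).2 d (by omega) (by omega) h3
        have h2' : us (i + 1) (ab i).2 < us (i + 1) (ab i).1 := by
          rw [hvB, hvA]; exact hF1
        omega
      · have huc : us i c = us (i + 1) c := by
          rw [hux c, Equiv.swap_apply_of_ne_of_ne hcA hcB]
        have hud : us i d = us (i + 1) d := by
          rw [hux d, Equiv.swap_apply_of_ne_of_ne hdA hdB]
        rw [huc, hud]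
        exact IH c d h1 h2 h3
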